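/- Let M be the free monoid on {α, β} with the involution x ↦ x̄ that reverses words and swaps α ↔ β. On the free complex vector space A with basis M, define a bilinear product ⊙ by x ⊙ y = Σ_{(a,g,b) : x = a·g, y = ḡ·b} a·b, summing over all factorizations. Then ⊙ is associative. -/

import Mathlib

/-- Words on the alphabet `{α, β}`, encoded as lists of booleans
(`true` = α, `false` = β); concatenation is the free monoid structure. -/
abbrev Wd := List Bool

/-- The reverse-and-swap involution `x ↦ x̄`. -/
def bar (w : Wd) : Wd := (w.map not).reverse

/-- The element `x ⊙ y = ∑_{x = a·g, y = ḡ·b} a·b` of the free vector space on words,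
for words `x, y`: the factorizations `x = a·g` are indexed by `k = length g`. -/
noncomputable def wp (x y : Wd) : Wd →₀ ℂ :=
  ∑ k ∈ Finset.range (min x.length y.length + 1),
    if y.take k = bar (x.drop (x.length - k))
    then Finsupp.single (x.take (x.length - k) ++ y.drop k) (1 : ℂ) else 0

/-- The bilinear extension of `⊙` to the free vector space `A` on words. -/
noncomputable def odot (f g : Wd →₀ ℂ) : Wd →₀ ℂ :=
  f.sum fun x cx => g.sum fun y cy => (cx * cy) • wp x y

-- bar lemmas
@[simp] lemma bar_nil : bar [] = [] := rfl
@[simp] lemma bar_length (w : Wd) : (bar w).length = w.length := by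
  simp [bar]
lemma bar_append (u v : Wd) : bar (u ++ v) = bar v ++ bar u := by
  simp [bar]
lemma bar_cons (l : Bool) (u : Wd) : bar (l :: u) = bar u ++ [!l] := by
  simp [bar]
lemma bar_concat (u : Wd) (c : Bool) : bar (u ++ [c]) = (!c) :: bar u := by
  simp [bar_append, bar]

@[simp] lemma wp_nil_left (z : Wd) : wp [] z = Finsupp.single z 1 := by
  simp [wp]
@[simp] lemma wp_nil_right (x : Wd) : wp x [] = Finsupp.single x 1 := by
  simp [wp, List.take_length]

lemma sum_ite_const {P : Prop} [Decidable P] {s : Finset ℕ} (g : ℕ → Wd →₀ ℂ) :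
    (∑ i ∈ s, if P then g i else 0) = if P then ∑ i ∈ s, g i else 0 := by
  split_ifs <;> simp

lemma wp_cons_right (x : Wd) (l : Bool) (y : Wd) :
    wp x (l :: y) = Finsupp.single (x ++ l :: y) 1 +
      (if x.getLast? = some (!l) then wp x.dropLast y else 0) := by
  rcases List.eq_nil_or_concat x with rfl | ⟨x', c, rfl⟩
  · simp
  · simp only [List.concat_eq_append]
    have hmin : min (x' ++ [c]).length (l :: y).length = min x'.length y.length + 1 := by
      simp [Nat.succ_min_succ]
    unfold wp
    rw [hmin, Finset.sum_range_succ']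
    have h0 : (if (l :: y).take 0 = bar ((x' ++ [c]).drop ((x' ++ [c]).length - 0))
        then Finsupp.single ((x' ++ [c]).take ((x' ++ [c]).length - 0) ++ (l :: y).drop 0) (1:ℂ)
        else 0) = Finsupp.single (x' ++ [c] ++ l :: y) 1 := by
      rw [if_pos (by simp [List.drop_length])]
      rw [Nat.sub_zero, List.take_length, List.drop_zero]
    rw [h0]
    have hstep : ∀ i ∈ Finset.range (min x'.length y.length + 1),
        (if (l :: y).take (i+1) = bar ((x' ++ [c]).drop ((x' ++ [c]).length - (i+1)))
         then Finsupp.single ((x' ++ [c]).take ((x' ++ [c]).length - (i+1)) ++ (l :: y).drop (i+1)) (1:ℂ) else 0)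
        = (if c = !l then (if y.take i = bar (x'.drop (x'.length - i))
            then Finsupp.single (x'.take (x'.length - i) ++ y.drop i) (1:ℂ) else 0) else 0) := by
      intro i hi
      have hi' : i ≤ min x'.length y.length := by
        have := Finset.mem_range.mp hi; omega
      have hd : (x' ++ [c]).length - (i+1) = x'.length - i := by
        simp
      rw [hd, List.drop_append_of_le_length (by omega), List.take_append_of_le_length (by omega),
        bar_concat]
      simp only [List.take_succ_cons, List.drop_succ_cons]
      by_cases hc : c = !l
      · have hl : l = !c := by rw [hc, Bool.not_not]
        simp [hc, ← hl]
      · have h2 : l ≠ !c := by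
          intro h; exact hc (by rw [h, Bool.not_not])
        simp [hc, h2]
    rw [Finset.sum_congr rfl hstep, sum_ite_const]
    rw [List.getLast?_concat, List.dropLast_concat]
    simp only [Option.some.injEq, wp]
    rw [add_comm]

lemma wp_append_cons (x : Wd) (l : Bool) (y z : Wd) :
    wp (x ++ l :: y) z = Finsupp.mapDomain (fun w => x ++ l :: w) (wp y z) +
      (if y.length + 1 ≤ z.length ∧ z.take (y.length + 1) = bar (l :: y)
       then wp x (z.drop (y.length + 1)) else 0) := by
  have hlen : (x ++ l :: y).length = x.length + (y.length + 1) := by simp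
  have hmd : Finsupp.mapDomain (fun w => x ++ l :: w) (wp y z)
      = ∑ k ∈ Finset.range (min y.length z.length + 1),
          if z.take k = bar (y.drop (y.length - k))
          then Finsupp.single (x ++ l :: (y.take (y.length - k) ++ z.drop k)) (1:ℂ) else 0 := by
    unfold wp
    rw [Finsupp.mapDomain_finset_sum]
    refine Finset.sum_congr rfl fun k _ => ?_
    rw [apply_ite (Finsupp.mapDomain fun w => x ++ l :: w), Finsupp.mapDomain_single,
      Finsupp.mapDomain_zero]
  have hterm : ∀ k, k ≤ y.length →
      (if z.take k = bar ((x ++ l :: y).drop ((x ++ l :: y).length - k))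
       then Finsupp.single ((x ++ l :: y).take ((x ++ l :: y).length - k) ++ z.drop k) (1:ℂ)
       else 0)
      = (if z.take k = bar (y.drop (y.length - k))
         then Finsupp.single (x ++ l :: (y.take (y.length - k) ++ z.drop k)) (1:ℂ) else 0) := by
    intro k hk
    have e1 : (x ++ l :: y).length - k = (x ++ [l]).length + (y.length - k) := by
      simp; omega
    have e2 : x ++ l :: y = (x ++ [l]) ++ y := by simp
    rw [e1, e2, List.drop_length_add_append, List.take_length_add_append]
    simp [List.append_assoc]
  rcases lt_or_ge z.length (y.length + 1) with hA | hB
  · have h1 : min (x ++ l :: y).length z.length = z.length := by omega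
    have h2 : min y.length z.length = z.length := by omega
    rw [if_neg (by rintro ⟨h1', -⟩; omega), add_zero, hmd, h2]
    unfold wp
    rw [h1]
    exact Finset.sum_congr rfl fun k hk => hterm k (by have := Finset.mem_range.mp hk; omega)
  · conv_lhs => unfold wp
    have h1 : min (x ++ l :: y).length z.length + 1
        = (y.length + 1) + (min x.length (z.length - (y.length + 1)) + 1) := by omega
    rw [h1, Finset.sum_range_add]
    congr 1
    · rw [hmd]
      have h2 : min y.length z.length = y.length := by omega
      rw [h2]
      exact Finset.sum_congr rfl fun k hk => hterm k (by have := Finset.mem_range.mp hk; omega)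
    · have hterm2 : ∀ u ∈ Finset.range (min x.length (z.length - (y.length + 1)) + 1),
          (if z.take ((y.length + 1) + u)
              = bar ((x ++ l :: y).drop ((x ++ l :: y).length - ((y.length + 1) + u)))
           then Finsupp.single ((x ++ l :: y).take ((x ++ l :: y).length - ((y.length + 1) + u))
              ++ z.drop ((y.length + 1) + u)) (1:ℂ) else 0)
          = (if z.take (y.length + 1) = bar (l :: y) then
              (if (z.drop (y.length + 1)).take u = bar (x.drop (x.length - u))
               then Finsupp.single (x.take (x.length - u) ++ (z.drop (y.length + 1)).drop u) (1:ℂ)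
               else 0) else 0) := by
        intro u hu
        have hu' : u ≤ x.length ∧ u ≤ z.length - (y.length + 1) := by
          have := Finset.mem_range.mp hu; omega
        have e1 : (x ++ l :: y).length - ((y.length + 1) + u) = x.length - u := by omega
        have e3 : z.drop ((y.length + 1) + u) = (z.drop (y.length + 1)).drop u := by
          rw [List.drop_drop]
        rw [e1, List.drop_append_of_le_length (by omega),
          List.take_append_of_le_length (by omega), bar_append, e3,
          List.take_add (l := z) (i := y.length + 1) (j := u)]
        have hiff : (z.take (y.length + 1) ++ (z.drop (y.length + 1)).take u
              = bar (l :: y) ++ bar (x.drop (x.length - u)))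
            ↔ (z.take (y.length + 1) = bar (l :: y)
              ∧ (z.drop (y.length + 1)).take u = bar (x.drop (x.length - u))) := by
          constructor
          · intro hh
            exact List.append_inj hh (by simp; omega)
          · rintro ⟨h1', h2'⟩
            rw [h1', h2']
        rw [if_congr hiff rfl rfl, ite_and]
      rw [Finset.sum_congr rfl hterm2, sum_ite_const, if_congr (and_iff_right hB) rfl rfl]
      refine if_congr Iff.rfl ?_ rfl
      unfold wp
      simp only [List.length_drop]

noncomputable def opR (x : Wd) : (Wd →₀ ℂ) →ₗ[ℂ] (Wd →₀ ℂ) :=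
  Finsupp.lsum ℂ fun w => LinearMap.toSpanSingleton ℂ _ (wp x w)
noncomputable def opL (z : Wd) : (Wd →₀ ℂ) →ₗ[ℂ] (Wd →₀ ℂ) :=
  Finsupp.lsum ℂ fun w => LinearMap.toSpanSingleton ℂ _ (wp w z)

lemma opR_apply (x : Wd) (g : Wd →₀ ℂ) : opR x g = g.sum fun w c => c • wp x w := rfl
lemma opL_apply (z : Wd) (f : Wd →₀ ℂ) : opL z f = f.sum fun w c => c • wp w z := rfl

@[simp] lemma opR_single (x w : Wd) (c : ℂ) : opR x (Finsupp.single w c) = c • wp x w := by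
  simp [opR]
@[simp] lemma opL_single (z w : Wd) (c : ℂ) : opL z (Finsupp.single w c) = c • wp w z := by
  simp [opL]

lemma key (x y z : Wd) : opL z (wp x y) = opR x (wp y z) := by
  induction y generalizing x z with
  | nil => simp
  | cons l y ih =>
    have hl : wp (l :: y) z = Finsupp.mapDomain (fun w => l :: w) (wp y z) +
        (if y.length + 1 ≤ z.length ∧ z.take (y.length + 1) = bar (l :: y)
         then Finsupp.single (z.drop (y.length + 1)) 1 else 0) := by
      simpa using wp_append_cons [] l y z
    have hmap : opR x (Finsupp.mapDomain (fun w => l :: w) (wp y z))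
        = Finsupp.mapDomain (fun w => x ++ l :: w) (wp y z) +
          (if x.getLast? = some (!l) then opR x.dropLast (wp y z) else 0) := by
      rw [opR_apply, Finsupp.sum_mapDomain_index (by simp) (by intros; rw [add_smul])]
      by_cases hP : x.getLast? = some (!l)
      · rw [if_pos hP, Finsupp.mapDomain, opR_apply, ← Finsupp.sum_add]
        refine Finsupp.sum_congr fun w _ => ?_
        rw [wp_cons_right, if_pos hP, smul_add, Finsupp.smul_single', mul_one]
      · rw [if_neg hP, add_zero, Finsupp.mapDomain]
        refine Finsupp.sum_congr fun w _ => ?_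
        rw [wp_cons_right, if_neg hP, add_zero, Finsupp.smul_single', mul_one]
    rw [wp_cons_right x l y, hl, map_add, map_add, opL_single, one_smul,
      apply_ite (opL z), map_zero, apply_ite (opR x), map_zero, opR_single, one_smul,
      hmap, wp_append_cons x l y z]
    by_cases hP : x.getLast? = some (!l)
    · rw [if_pos hP, if_pos hP, ih]
      abel
    · rw [if_neg hP, if_neg hP]
      abel

lemma odot_zero_left (g : Wd →₀ ℂ) : odot 0 g = 0 := by
  simp [odot]

lemma odot_zero_right (f : Wd →₀ ℂ) : odot f 0 = 0 := by
  simp [odot]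

lemma odot_add_left (f₁ f₂ g : Wd →₀ ℂ) : odot (f₁ + f₂) g = odot f₁ g + odot f₂ g := by
  unfold odot
  apply Finsupp.sum_add_index' <;> intro a
  · simp
  · intro b₁ b₂
    rw [← Finsupp.sum_add]
    exact Finsupp.sum_congr fun y _ => by rw [add_mul, add_smul]

lemma odot_add_right (f g₁ g₂ : Wd →₀ ℂ) : odot f (g₁ + g₂) = odot f g₁ + odot f g₂ := by
  unfold odot
  rw [← Finsupp.sum_add]
  refine Finsupp.sum_congr fun x _ => ?_
  apply Finsupp.sum_add_index' <;> intro a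
  · simp
  · intro b₁ b₂
    rw [mul_add, add_smul]

lemma odot_single_left (x : Wd) (a : ℂ) (g : Wd →₀ ℂ) :
    odot (Finsupp.single x a) g = a • opR x g := by
  unfold odot
  rw [Finsupp.sum_single_index (by simp)]
  rw [opR_apply, Finsupp.smul_sum]
  exact Finsupp.sum_congr fun y _ => by rw [mul_smul]

lemma odot_single_right (f : Wd →₀ ℂ) (z : Wd) (c : ℂ) :
    odot f (Finsupp.single z c) = c • opL z f := by
  unfold odot
  rw [opL_apply, Finsupp.smul_sum]
  exact Finsupp.sum_congr fun w _ => by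
    rw [Finsupp.sum_single_index (by simp), smul_comm, smul_smul, mul_comm]

theorem stmt5 (f g h : Wd →₀ ℂ) : odot (odot f g) h = odot f (odot g h) := by
  induction f using Finsupp.induction_linear with
  | zero => simp [odot_zero_left]
  | add f₁ f₂ h₁ h₂ => simp [odot_add_left, h₁, h₂]
  | single x a =>
    induction g using Finsupp.induction_linear with
    | zero => simp [odot_zero_left, odot_zero_right]
    | add g₁ g₂ h₁ h₂ => simp [odot_add_left, odot_add_right, h₁, h₂]
    | single y b =>
      induction h using Finsupp.induction_linear with
      | zero => simp [odot_zero_right]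
      | add h₁ h₂ ih₁ ih₂ => simp [odot_add_right, ih₁, ih₂]
      | single z c =>
        rw [odot_single_left x a, odot_single_right _ z c, odot_single_right _ z c,
          odot_single_left x a, map_smul, map_smul, opR_single, opL_single, map_smul, map_smul]
        rw [key]
        module
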